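/- If a measurable set X of finite positive measure tiles a locally compact abelian group E by translations (i.e., there is a translation set Λ with 1_X ∗ 1_Λ = 1_E almost everywhere), then X tiles its complement weakly: there exists a locally finite Borel measure μ with 1_X ∗ μ = 1_{E \ X} almost everywhere. -/

import Mathlib

open MeasureTheory Pointwise

/-- If a measurable set `X` of finite positive Haar measure tiles a locally compact
abelian group `E` by translations (a.e. every point is covered by exactly one translate
`X + λ`, `λ ∈ Λ`), then `X` tiles its complement weakly: there exists a locally finite
Borel measure `μ` with `1_X ∗ μ = 1_{E \ X}` almost everywhere. -/
theorem spectral_weak_tiling_of_tiling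
    {E : Type*} [AddCommGroup E] [TopologicalSpace E] [IsTopologicalAddGroup E]
    [LocallyCompactSpace E] [MeasurableSpace E] [BorelSpace E]
    (ν : Measure E) [ν.IsAddHaarMeasure]
    (X : Set E) (hXmeas : MeasurableSet X) (hpos : 0 < ν X) (hfin : ν X < ⊤)
    (Λ : Set E) (hΛ : Λ.Countable)
    (htile : ∀ᵐ x ∂ν, ∃! l, l ∈ Λ ∧ x - l ∈ X) :
    ∃ μ : Measure E, IsLocallyFiniteMeasure μ ∧
      ∀ᵐ x ∂ν, (∫⁻ y, X.indicator (fun _ => (1 : ENNReal)) (x - y) ∂μ)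
        = Xᶜ.indicator (fun _ => (1 : ENNReal)) x := by
  classical
  haveI hΛcount : Countable ↥Λ := hΛ.to_subtype
  have hν0 : ν ≠ 0 := by
    intro h
    rw [h] at hpos
    simp at hpos
  haveI : (ae ν).NeBot := ae_neBot.2 hν0
  -- the "bad" set has measure zero
  have hbad : ν {x | ¬ ∃! l, l ∈ Λ ∧ x - l ∈ X} = 0 := ae_iff.1 htile
  -- pick some translate l0 ∈ Λ
  obtain ⟨x0, l0, ⟨hl0Λ, -⟩, -⟩ := htile.exists
  -- Key finiteness: Λ meets every compact set in a finite set.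
  have hΛK : ∀ K : Set E, IsCompact K → (Λ ∩ K).Finite := by
    intro K hK
    by_contra hinf
    obtain ⟨K0, hK0c, hK0mem⟩ := exists_compact_mem_nhds (0 : E)
    set U := interior K0 with hUdef
    have hUopen : IsOpen U := isOpen_interior
    have hUpos : 0 < ν U :=
      hUopen.measure_pos ν ⟨0, mem_interior_iff_mem_nhds.2 hK0mem⟩
    -- find l1 ∈ Λ whose translate of X meets U in positive measure
    have hcover : ∃ l1 ∈ Λ, 0 < ν (U ∩ {x | x - l1 ∈ X}) := by
      by_contra hno
      push_neg at hno
      have hW0 : ν (⋃ l : ↥Λ, U ∩ {x | x - (l : E) ∈ X}) = 0 :=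
        measure_iUnion_null fun l => le_zero_iff.1 (hno l l.2)
      have hWc : ν {x | ¬ ∃ l ∈ Λ, x - l ∈ X} = 0 := by
        refine measure_mono_null ?_ hbad
        intro x hx hx'
        obtain ⟨l, ⟨hlΛ, hlX⟩, -⟩ := hx'
        exact hx ⟨l, hlΛ, hlX⟩
      have : ν U ≤ ν (⋃ l : ↥Λ, U ∩ {x | x - (l : E) ∈ X})
          + ν {x | ¬ ∃ l ∈ Λ, x - l ∈ X} := by
        refine le_trans (measure_le_inter_add_diff ν U {x | ∃ l ∈ Λ, x - l ∈ X}) ?_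
        refine add_le_add (measure_mono ?_) (measure_mono ?_)
        · rintro x ⟨hxU, l, hlΛ, hlX⟩
          exact Set.mem_iUnion.2 ⟨⟨l, hlΛ⟩, hxU, hlX⟩
        · intro x hx
          exact hx.2
      rw [hW0, hWc] at this
      simp only [add_zero, le_zero_iff] at this
      exact hUpos.ne' this
    obtain ⟨l1, hl1Λ, hc⟩ := hcover
    -- a bounded piece of X of positive measure
    set D : Set E := (fun y => y + l1) ⁻¹' (U ∩ {x | x - l1 ∈ X}) with hDdef
    have hDmeas : MeasurableSet D :=
      (measurable_add_const l1)
        (hUopen.measurableSet.inter ((measurable_sub_const l1) hXmeas))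
    have hDν : ν D = ν (U ∩ {x | x - l1 ∈ X}) :=
      measure_preimage_add_right ν l1 _
    have hDX : D ⊆ X := by
      intro y hy
      have := hy.2
      simpa using this
    have hDU : D ⊆ (fun y => y + l1) ⁻¹' U := fun y hy => hy.1
    -- the infinite family of a.e. disjoint translates
    set S := Λ ∩ K with hSdef
    haveI : Countable ↥S := (hΛ.mono Set.inter_subset_left).to_subtype
    haveI : Infinite ↥S := Set.infinite_coe_iff.2 hinf
    set Dl : ↥S → Set E := fun l => (fun x => x - (l : E)) ⁻¹' D with hDldef
    have hDlmeas : ∀ l, NullMeasurableSet (Dl l) ν := fun l =>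
      ((measurable_sub_const ((l : E))) hDmeas).nullMeasurableSet
    have hDlν : ∀ l, ν (Dl l) = ν D := by
      intro l
      have : (fun x => x - (l : E)) = fun x => x + (-(l : E)) := by
        funext x; rw [sub_eq_add_neg]
      rw [hDldef]
      simp only [this]
      exact measure_preimage_add_right ν _ _
    have hdisj : Pairwise (Function.onFun (AEDisjoint ν) Dl) := by
      intro l l' hne
      refine measure_mono_null ?_ hbad
      rintro x ⟨hx1, hx2⟩
      intro hx
      obtain ⟨u, -, huniq⟩ := hx
      have h1 : (l : E) = u := huniq _ ⟨l.2.1, hDX hx1⟩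
      have h2 : (l' : E) = u := huniq _ ⟨l'.2.1, hDX hx2⟩
      exact hne (Subtype.ext (h1.trans h2.symm))
    have hsum : ν (⋃ l, Dl l) = ∑' l : ↥S, ν (Dl l) := measure_iUnion₀ hdisj hDlmeas
    have htop : (∑' l : ↥S, ν (Dl l)) = ⊤ := by
      have hDpos : ν D ≠ 0 := by rw [hDν]; exact hc.ne'
      calc (∑' l : ↥S, ν (Dl l)) = ∑' _ : ↥S, ν D := by
            exact tsum_congr fun l => hDlν l
        _ = ⊤ := ENNReal.tsum_const_eq_top_of_ne_zero hDpos
    -- but the union is contained in a compact set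
    have hBsub : (⋃ l, Dl l) ⊆ (fun x => x + l1) ⁻¹' closure (K0 + K) := by
      rintro x hx
      obtain ⟨l, hl⟩ := Set.mem_iUnion.1 hx
      have h1 : (x - (l : E)) + l1 ∈ U := hDU hl
      have h2 : x + l1 = ((x - (l : E)) + l1) + (l : E) := by abel
      simp only [Set.mem_preimage]
      refine subset_closure ?_
      rw [h2]
      exact Set.add_mem_add (interior_subset h1) l.2.2
    have hBfin : ν ((fun x => x + l1) ⁻¹' closure (K0 + K)) < ⊤ := by
      rw [measure_preimage_add_right]
      exact (hK0c.add hK).closure.measure_lt_top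
    have : (⊤ : ENNReal) ≤ ν ((fun x => x + l1) ⁻¹' closure (K0 + K)) := by
      rw [← htop, ← hsum]
      exact measure_mono hBsub
    exact absurd (lt_of_le_of_lt this hBfin) (by simp)
  -- the weak tiling measure
  set Λ' := Λ \ {l0} with hΛ'def
  haveI : Countable ↥Λ' := (hΛ.mono Set.diff_subset).to_subtype
  set μ : Measure E := Measure.sum (fun l : ↥Λ' => Measure.dirac ((l : E) - l0)) with hμdef
  refine ⟨μ, ?_, ?_⟩
  · -- local finiteness
    constructor
    intro x
    obtain ⟨K, hKcomp, hKmem⟩ := exists_compact_mem_nhds x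
    refine ⟨interior K, interior_mem_nhds.2 hKmem, ?_⟩
    rw [hμdef, Measure.sum_apply _ isOpen_interior.measurableSet]
    have heval : ∀ l : ↥Λ', Measure.dirac ((l : E) - l0) (interior K)
        = (interior K).indicator (fun _ => (1 : ENNReal)) ((l : E) - l0) := fun l =>
      Measure.dirac_apply' _ isOpen_interior.measurableSet
    -- the support is finite
    have hFfin : {l : ↥Λ' | (l : E) - l0 ∈ interior K}.Finite := by
      have hK' : IsCompact ((fun y => y + l0) '' K) := hKcomp.image (continuous_add_right l0)
      have himg : Subtype.val '' {l : ↥Λ' | (l : E) - l0 ∈ interior K}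
          ⊆ Λ ∩ ((fun y => y + l0) '' K) := by
        rintro y ⟨l, hl, rfl⟩
        refine ⟨l.2.1, ⟨(l : E) - l0, interior_subset hl, by simp⟩⟩
      exact Set.Finite.of_finite_image (((hΛK _ hK').subset himg))
        (Set.injOn_of_injective Subtype.val_injective)
    calc (∑' l : ↥Λ', Measure.dirac ((l : E) - l0) (interior K))
        = ∑' l : ↥Λ', (interior K).indicator (fun _ => (1 : ENNReal)) ((l : E) - l0) :=
          tsum_congr heval
      _ = ∑ l ∈ hFfin.toFinset,
            (interior K).indicator (fun _ => (1 : ENNReal)) ((l : E) - l0) := by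
          refine tsum_eq_sum ?_
          intro l hl
          rw [Set.Finite.mem_toFinset] at hl
          simp only [Set.mem_setOf_eq] at hl
          exact Set.indicator_of_notMem hl _
      _ < ⊤ := by
          refine ENNReal.sum_lt_top.2 fun l _ => ?_
          by_cases h : (l : E) - l0 ∈ interior K
          · simp [Set.indicator_of_mem h]
          · simp [Set.indicator_of_notMem h]
  · -- the convolution identity
    have h2 : ∀ᵐ x ∂ν, ∃! l, l ∈ Λ ∧ (x + l0) - l ∈ X :=
      (measurePreserving_add_right ν l0).quasiMeasurePreserving.ae htile
    filter_upwards [h2] with x hx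
    have hmeas : Measurable fun y => X.indicator (fun _ => (1 : ENNReal)) (x - y) :=
      (measurable_const.indicator hXmeas).comp (measurable_id.const_sub x)
    rw [hμdef, lintegral_sum_measure]
    have heval : ∀ l : ↥Λ',
        (∫⁻ y, X.indicator (fun _ => (1 : ENNReal)) (x - y) ∂(Measure.dirac ((l : E) - l0)))
          = X.indicator (fun _ => (1 : ENNReal)) ((x + l0) - (l : E)) := by
      intro l
      rw [lintegral_dirac' _ hmeas]
      congr 1
      abel
    rw [tsum_congr heval]
    by_cases hxX : x ∈ X
    · have hrhs : Xᶜ.indicator (fun _ => (1 : ENNReal)) x = 0 :=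
        Set.indicator_of_notMem (by simpa using hxX) _
      rw [hrhs]
      have hterm : ∀ l : ↥Λ', X.indicator (fun _ => (1 : ENNReal)) ((x + l0) - (l : E)) = 0 := by
        intro l
        refine Set.indicator_of_notMem ?_ _
        intro hmem
        obtain ⟨u, -, huniq⟩ := hx
        have h1 : (l : E) = u := huniq _ ⟨l.2.1, hmem⟩
        have h2 : l0 = u := huniq _ ⟨hl0Λ, by simpa using hxX⟩
        exact l.2.2 (h1.trans h2.symm)
      rw [tsum_congr hterm]
      exact tsum_zero
    · obtain ⟨l1, ⟨hl1Λ, hl1X⟩, huniq⟩ := hx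
      have hl1ne : l1 ≠ l0 := by
        intro h
        rw [h] at hl1X
        simp only [add_sub_cancel_right] at hl1X
        exact hxX hl1X
      have hrhs : Xᶜ.indicator (fun _ => (1 : ENNReal)) x = 1 :=
        Set.indicator_of_mem (Set.mem_compl hxX) _
      rw [hrhs]
      rw [tsum_eq_single (⟨l1, hl1Λ, hl1ne⟩ : ↥Λ') ?_]
      · exact Set.indicator_of_mem hl1X _
      · intro l' hne
        refine Set.indicator_of_notMem ?_ _
        intro hmem
        exact hne (Subtype.ext (huniq _ ⟨l'.2.1, hmem⟩))
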